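/- Let MV : {1, 2, 3, …} → (0, 1) be strictly increasing, let c ∈ ℝ satisfy MV(1) < c, and suppose MV(N₀) > c for some N₀. For p ∈ [0, 1] and N ≥ 2 define Φ(p, N) = Σ_{k=0}^{N−1} (N−1 choose k) p^k (1 − p)^{N−1−k} MV(1 + k), i.e. Φ(p, N) = E[MV(1 + B)] with B ~ Binomial(N − 1, p). Then: (i) for every N with MV(N) > c there exists a unique p(N) ∈ (0, 1) with Φ(p(N), N) = c; (ii) p(N) is strictly decreasing in N on the set of such N; and (iii) p(N) → 0 as N → ∞. -/

import Mathlib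

namespace MixedEntryAux

noncomputable def W (n k : ℕ) (p : ℝ) : ℝ := (n.choose k : ℝ) * p ^ k * (1 - p) ^ (n - k)

noncomputable def S (n : ℕ) (f : ℕ → ℝ) (p : ℝ) : ℝ :=
  ∑ k ∈ Finset.range (n + 1), W n k p * f k

lemma W_nonneg {n k : ℕ} {p : ℝ} (h0 : 0 ≤ p) (h1 : p ≤ 1) : 0 ≤ W n k p := by
  unfold W
  have : (0:ℝ) ≤ 1 - p := by linarith
  positivity

lemma sum_W (n : ℕ) (p : ℝ) : ∑ k ∈ Finset.range (n + 1), W n k p = 1 := by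
  calc ∑ k ∈ Finset.range (n + 1), W n k p
      = ∑ k ∈ Finset.range (n + 1), p ^ k * (1 - p) ^ (n - k) * (n.choose k : ℝ) :=
        Finset.sum_congr rfl fun k _ => by unfold W; ring
    _ = (p + (1 - p)) ^ n := (add_pow p (1 - p) n).symm
    _ = 1 := by norm_num

lemma S_zero (n : ℕ) (f : ℕ → ℝ) : S n f 0 = f 0 := by
  unfold S
  rw [Finset.sum_eq_single 0]
  · simp [W]
  · intro k _ hk
    simp [W, zero_pow hk]
  · simp

lemma S_one (n : ℕ) (f : ℕ → ℝ) : S n f 1 = f n := by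
  unfold S
  rw [Finset.sum_eq_single n]
  · simp [W]
  · intro k hk hkn
    have : 0 < n - k := by
      have := Finset.mem_range.mp hk; omega
    simp [W, sub_self, zero_pow (by omega : n - k ≠ 0)]
  · intro h; exact absurd (Finset.self_mem_range_succ n) h

lemma S_succ (n : ℕ) (f : ℕ → ℝ) (p : ℝ) :
    S (n + 1) f p = (1 - p) * S n f p + p * S n (fun k => f (k + 1)) p := by
  unfold S W
  rw [Finset.sum_range_succ']
  have hsplit : ∀ x ∈ Finset.range (n + 1),
      ((n + 1).choose (x + 1) : ℝ) * p ^ (x + 1) * (1 - p) ^ (n + 1 - (x + 1)) * f (x + 1)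
      = (n.choose x : ℝ) * p ^ (x + 1) * (1 - p) ^ (n - x) * f (x + 1)
        + (n.choose (x + 1) : ℝ) * p ^ (x + 1) * (1 - p) ^ (n - x) * f (x + 1) := by
    intro x _
    have h1 : n + 1 - (x + 1) = n - x := by omega
    rw [h1, Nat.choose_succ_succ]
    push_cast
    ring
  rw [Finset.sum_congr rfl hsplit, Finset.sum_add_distrib]
  have hA : ∑ x ∈ Finset.range (n + 1),
      (n.choose x : ℝ) * p ^ (x + 1) * (1 - p) ^ (n - x) * f (x + 1)
      = p * ∑ k ∈ Finset.range (n + 1),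
          (n.choose k : ℝ) * p ^ k * (1 - p) ^ (n - k) * f (k + 1) := by
    rw [Finset.mul_sum]
    exact Finset.sum_congr rfl fun x _ => by ring
  have hB : ∑ x ∈ Finset.range (n + 1),
      (n.choose (x + 1) : ℝ) * p ^ (x + 1) * (1 - p) ^ (n - x) * f (x + 1)
      = ∑ x ∈ Finset.range n,
          (n.choose (x + 1) : ℝ) * p ^ (x + 1) * (1 - p) ^ (n - x) * f (x + 1) := by
    rw [Finset.sum_range_succ]
    simp
  have hC : (1 - p) * ∑ k ∈ Finset.range (n + 1),
      (n.choose k : ℝ) * p ^ k * (1 - p) ^ (n - k) * f k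
      = (∑ x ∈ Finset.range n,
          (n.choose (x + 1) : ℝ) * p ^ (x + 1) * (1 - p) ^ (n - x) * f (x + 1))
        + (1 - p) ^ (n + 1) * f 0 := by
    rw [Finset.mul_sum, Finset.sum_range_succ']
    congr 1
    · refine Finset.sum_congr rfl fun x hx => ?_
      have hx' : x < n := Finset.mem_range.mp hx
      have he : n - x = (n - (x + 1)) + 1 := by omega
      rw [he, pow_succ]
      ring
    · simp [pow_succ]
      ring
  rw [hA, hB]
  rw [hC]
  simp
  ring

lemma S_le_S {n : ℕ} {f g : ℕ → ℝ} {p : ℝ} (h0 : 0 ≤ p) (h1 : p ≤ 1)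
    (hfg : ∀ k, f k ≤ g k) : S n f p ≤ S n g p :=
  Finset.sum_le_sum fun k _ => mul_le_mul_of_nonneg_left (hfg k) (W_nonneg h0 h1)

lemma S_lt_S {n : ℕ} {f g : ℕ → ℝ} {p : ℝ} (h0 : 0 ≤ p) (h1 : p ≤ 1)
    (hfg : ∀ k, f k < g k) : S n f p < S n g p := by
  have hex : ∃ k ∈ Finset.range (n + 1), 0 < W n k p := by
    by_contra h
    push_neg at h
    have : (∑ k ∈ Finset.range (n + 1), W n k p) ≤ 0 :=
      Finset.sum_nonpos h
    rw [sum_W] at this; linarith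
  obtain ⟨k, hk, hWk⟩ := hex
  exact Finset.sum_lt_sum
    (fun i _ => mul_le_mul_of_nonneg_left (le_of_lt (hfg i)) (W_nonneg h0 h1))
    ⟨k, hk, by exact mul_lt_mul_of_pos_left (hfg k) hWk⟩

lemma S_mono_p : ∀ (n : ℕ) (f : ℕ → ℝ), (∀ k, f k ≤ f (k + 1)) →
    ∀ {p p' : ℝ}, 0 ≤ p → p ≤ p' → p' ≤ 1 → S n f p ≤ S n f p' := by
  intro n
  induction n with
  | zero => intro f hf p p' h0 hpp h1; simp [S, W]
  | succ n ih =>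
    intro f hf p p' h0 hpp h1
    rw [S_succ, S_succ]
    have ha := ih f hf h0 hpp h1
    have hb := ih (fun k => f (k + 1)) (fun k => hf (k + 1)) h0 hpp h1
    have hab : S n f p ≤ S n (fun k => f (k + 1)) p :=
      S_le_S h0 (le_trans hpp h1) hf
    nlinarith

lemma S_strict_p {f : ℕ → ℝ} (hf : ∀ k, f k < f (k + 1)) (n : ℕ) {p p' : ℝ}
    (h0 : 0 ≤ p) (hpp : p < p') (h1 : p' ≤ 1) : S (n + 1) f p < S (n + 1) f p' := by
  have hf' : ∀ k, f k ≤ f (k + 1) := fun k => le_of_lt (hf k)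
  rw [S_succ, S_succ]
  have ha := S_mono_p n f hf' h0 (le_of_lt hpp) h1
  have hb := S_mono_p n (fun k => f (k + 1)) (fun k => hf' (k + 1)) h0 (le_of_lt hpp) h1
  have hab : S n f p < S n (fun k => f (k + 1)) p :=
    S_lt_S h0 (le_of_lt (lt_of_lt_of_le hpp h1)) hf
  nlinarith

lemma S_lt_succ {f : ℕ → ℝ} (hf : ∀ k, f k < f (k + 1)) (n : ℕ) {p : ℝ}
    (h0 : 0 < p) (h1 : p ≤ 1) : S n f p < S (n + 1) f p := by
  rw [S_succ]
  have h := S_lt_S (n := n) (f := f) (g := fun k => f (k + 1)) (le_of_lt h0) h1 hf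
  nlinarith

lemma S_continuous (n : ℕ) (f : ℕ → ℝ) : Continuous fun p => S n f p := by
  unfold S W
  exact continuous_finset_sum _ fun k _ => by fun_prop

lemma tail_small {ε : ℝ} (hε0 : 0 < ε) (hε1 : ε < 1) (m : ℕ) {δ : ℝ} (hδ : 0 < δ) :
    ∃ M : ℕ, ∀ n ≥ M, ∑ k ∈ Finset.range m, W n k ε < δ := by
  set r : ℝ := 1 - ε with hr
  have hr0 : 0 < r := by simp [hr]; linarith
  have hr1 : r < 1 := by simp [hr]; linarith
  have hrm : (0:ℝ) < r ^ m := pow_pos hr0 m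
  set C : ℝ := (m : ℝ) / r ^ m with hC
  have h1 : Filter.Tendsto (fun n : ℕ => (n : ℝ) ^ m * r ^ n) Filter.atTop (nhds 0) :=
    (summable_pow_mul_geometric_of_norm_lt_one (R := ℝ) m
      (by rw [Real.norm_eq_abs, abs_of_pos hr0]; exact hr1)).tendsto_atTop_zero
  have h2 : Filter.Tendsto (fun n : ℕ => C * ((n : ℝ) ^ m * r ^ n)) Filter.atTop (nhds 0) := by
    simpa using h1.const_mul C
  have h3 : ∀ᶠ n : ℕ in Filter.atTop, C * ((n : ℝ) ^ m * r ^ n) < δ :=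
    h2.eventually_lt_const hδ
  rw [Filter.eventually_atTop] at h3
  obtain ⟨M, hM⟩ := h3
  refine ⟨max M (m + 1), fun n hn => ?_⟩
  have hnM : M ≤ n := le_trans (le_max_left _ _) hn
  have hnm : m + 1 ≤ n := le_trans (le_max_right _ _) hn
  have hbound : ∀ k ∈ Finset.range m, W n k ε ≤ (n : ℝ) ^ m * r ^ (n - m) := by
    intro k hk
    have hkm : k < m := Finset.mem_range.mp hk
    have hch : (n.choose k : ℝ) ≤ (n : ℝ) ^ k := by
      exact_mod_cast Nat.cast_le.mpr (Nat.choose_le_pow n k)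
    have hεk : ε ^ k ≤ 1 := pow_le_one₀ (le_of_lt hε0) (le_of_lt hε1)
    have hrk : r ^ (n - k) ≤ r ^ (n - m) :=
      pow_le_pow_of_le_one (le_of_lt hr0) (le_of_lt hr1) (by omega)
    have hnk : (n : ℝ) ^ k ≤ (n : ℝ) ^ m :=
      pow_le_pow_right₀ (by exact_mod_cast Nat.one_le_cast.mpr (by omega : 1 ≤ n)) (by omega : k ≤ m)
    have hW : W n k ε = (n.choose k : ℝ) * ε ^ k * r ^ (n - k) := rfl
    rw [hW]
    have h0ch : (0:ℝ) ≤ (n.choose k : ℝ) := by positivity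
    have hrkpos : (0:ℝ) ≤ r ^ (n - k) := le_of_lt (pow_pos hr0 _)
    have hA : (n.choose k : ℝ) * ε ^ k ≤ (n : ℝ) ^ m := by
      calc (n.choose k : ℝ) * ε ^ k
          ≤ (n : ℝ) ^ k * 1 := mul_le_mul hch hεk (by positivity) (by positivity)
        _ = (n : ℝ) ^ k := mul_one _
        _ ≤ (n : ℝ) ^ m := hnk
    exact mul_le_mul hA hrk hrkpos (by positivity)
  have hsum : ∑ k ∈ Finset.range m, W n k ε ≤ (m : ℝ) * ((n : ℝ) ^ m * r ^ (n - m)) := by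
    calc ∑ k ∈ Finset.range m, W n k ε
        ≤ ∑ _k ∈ Finset.range m, (n : ℝ) ^ m * r ^ (n - m) := Finset.sum_le_sum hbound
      _ = (m : ℝ) * ((n : ℝ) ^ m * r ^ (n - m)) := by
          rw [Finset.sum_const, Finset.card_range]; ring
  have heq : (m : ℝ) * ((n : ℝ) ^ m * r ^ (n - m)) = C * ((n : ℝ) ^ m * r ^ n) := by
    have hrn : r ^ (n - m) * r ^ m = r ^ n := by
      rw [← pow_add]; congr 1; omega
    rw [hC]
    field_simp
    rw [← hrn]
    ring
  have := hM n hnM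
  linarith [hsum, heq ▸ hsum]

end MixedEntryAux

open MixedEntryAux in
/-- Algebraic core of the paper's Theorem 2 (circumstance linkage model): `MV` is the
strictly increasing marginal value of effort, valued in `(0, 1)` on `{1, 2, …}`, `c` is
the marginal cost at the entry-indifference action, with `MV 1 < c < MV N₀` for some
`N₀`.  `Φ p N = E[MV (1 + B)]` with `B ~ Binomial (N − 1, p)`.  Then: (i) for every
population size `N ≥ 2` with `MV N > c` there is a unique mixed-equilibrium entry
probability `p(N) ∈ (0, 1)` solving `Φ (p(N)) N = c`; (ii) it is strictly decreasing in
`N`; and (iii) it tends to `0` as `N → ∞`. -/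
theorem mixed_entry_equilibrium
    (MV : ℕ → ℝ)
    (hrange : ∀ n : ℕ, 1 ≤ n → MV n ∈ Set.Ioo (0 : ℝ) 1)
    (hmono : ∀ m n : ℕ, 1 ≤ m → m < n → MV m < MV n)
    (c : ℝ) (hc1 : MV 1 < c)
    (N₀ : ℕ) (hN₀ : 1 ≤ N₀) (hcN₀ : c < MV N₀)
    (Φ : ℝ → ℕ → ℝ)
    (hΦ : ∀ (p : ℝ) (N : ℕ), Φ p N =
      ∑ k ∈ Finset.range N,
        ((N - 1).choose k : ℝ) * p ^ k * (1 - p) ^ (N - 1 - k) * MV (1 + k)) :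
    -- (i) existence and uniqueness
    (∀ N : ℕ, 2 ≤ N → c < MV N →
      ∃! p : ℝ, p ∈ Set.Ioo (0 : ℝ) 1 ∧ Φ p N = c) ∧
    -- (ii) strict monotonicity
    (∀ (N N' : ℕ) (p p' : ℝ), 2 ≤ N → N < N' → c < MV N → c < MV N' →
      p ∈ Set.Ioo (0 : ℝ) 1 → Φ p N = c →
      p' ∈ Set.Ioo (0 : ℝ) 1 → Φ p' N' = c → p' < p) ∧
    -- (iii) vanishing entry probability
    (∀ ε : ℝ, 0 < ε → ∃ M : ℕ, ∀ N : ℕ, M ≤ N →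
      ∀ p : ℝ, p ∈ Set.Ioo (0 : ℝ) 1 → Φ p N = c → p < ε) := by
  set f : ℕ → ℝ := fun k => MV (1 + k) with hfdef
  have hf : ∀ k, f k < f (k + 1) := fun k =>
    hmono (1 + k) (1 + (k + 1)) (by omega) (by omega)
  have hf_le : ∀ k, f k ≤ f (k + 1) := fun k => le_of_lt (hf k)
  have hf_pos : ∀ k, 0 < f k := fun k => (hrange (1 + k) (by omega)).1
  have hΦS : ∀ (p : ℝ) (N : ℕ), 1 ≤ N → Φ p N = S (N - 1) f p := by
    intro p N hN
    rw [hΦ]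
    unfold S W
    have h : N - 1 + 1 = N := by omega
    rw [h]
  refine ⟨?_, ?_, ?_⟩
  · -- (i) existence and uniqueness
    intro N hN2 hcN
    obtain ⟨m, hm⟩ : ∃ m, N - 1 = m + 1 := ⟨N - 2, by omega⟩
    have hcont : ContinuousOn (fun p => S (N - 1) f p) (Set.Icc (0:ℝ) 1) :=
      (S_continuous _ _).continuousOn
    have h0 : S (N - 1) f 0 = MV 1 := by rw [S_zero]
    have h1 : S (N - 1) f 1 = MV N := by
      rw [S_one]
      simp only [hfdef]
      congr 1
      omega
    have hIVT := intermediate_value_Ioo (by norm_num : (0:ℝ) ≤ 1) hcont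
    have hcmem : c ∈ Set.Ioo (S (N - 1) f 0) (S (N - 1) f 1) := by
      rw [h0, h1]; exact ⟨hc1, hcN⟩
    obtain ⟨p, hpIoo, hpc'⟩ := hIVT hcmem
    have hpc : S (N - 1) f p = c := hpc'
    refine ⟨p, ⟨hpIoo, by rw [hΦS p N (by omega)]; exact hpc⟩, ?_⟩
    rintro q ⟨hqIoo, hqc⟩
    rw [hΦS q N (by omega)] at hqc
    by_contra hne
    rcases lt_or_gt_of_ne hne with h | h
    · have hlt : S (m + 1) f q < S (m + 1) f p :=
        S_strict_p hf m (le_of_lt hqIoo.1) h (le_of_lt hpIoo.2)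
      rw [← hm] at hlt
      rw [hpc, hqc] at hlt
      exact lt_irrefl _ hlt
    · have hlt : S (m + 1) f p < S (m + 1) f q :=
        S_strict_p hf m (le_of_lt hpIoo.1) h (le_of_lt hqIoo.2)
      rw [← hm] at hlt
      rw [hpc, hqc] at hlt
      exact lt_irrefl _ hlt
  · -- (ii) strict monotonicity
    intro N N' p p' hN2 hNN' hcN hcN' hp hpc hp' hp'c
    rw [hΦS p N (by omega)] at hpc
    rw [hΦS p' N' (by omega)] at hp'c
    have hsm : StrictMono (fun n => S n f p) :=
      strictMono_nat_of_lt_succ fun n => S_lt_succ hf n hp.1 (le_of_lt hp.2)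
    have hmonoN : S (N - 1) f p < S (N' - 1) f p := hsm (by omega : N - 1 < N' - 1)
    by_contra h
    push_neg at h
    have hle : S (N' - 1) f p ≤ S (N' - 1) f p' :=
      S_mono_p (N' - 1) f hf_le (le_of_lt hp.1) h (le_of_lt hp'.2)
    rw [hp'c] at hle
    rw [hpc] at hmonoN
    linarith
  · -- (iii) vanishing
    intro ε hε
    by_cases hε1 : 1 ≤ ε
    · exact ⟨0, fun N _ p hp _ => lt_of_lt_of_le hp.2 hε1⟩
    push_neg at hε1
    have hMV0 : 0 < MV N₀ := (hrange N₀ hN₀).1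
    have hδ : 0 < (MV N₀ - c) / MV N₀ := div_pos (by linarith) hMV0
    obtain ⟨M, hM⟩ := tail_small hε hε1 N₀ hδ
    refine ⟨M + N₀ + 2, fun N hN p hp hpc => ?_⟩
    rw [hΦS p N (by omega)] at hpc
    by_contra hpe
    push_neg at hpe
    set n := N - 1 with hn
    have hnM : n ≥ M := by omega
    have hT := hM n hnM
    set T := ∑ k ∈ Finset.range N₀, W n k ε with hTdef
    have hε0 : (0:ℝ) ≤ ε := le_of_lt hε
    have hεle1 : ε ≤ 1 := le_of_lt hε1
    have hsplit : S n f ε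
        = ∑ k ∈ Finset.range N₀, W n k ε * f k
          + ∑ k ∈ Finset.Ico N₀ (n + 1), W n k ε * f k := by
      unfold S
      rw [Finset.range_eq_Ico,
        ← Finset.sum_Ico_consecutive _ (Nat.zero_le N₀) (by omega : N₀ ≤ n + 1),
        ← Finset.range_eq_Ico]
    have hsumW : ∑ k ∈ Finset.Ico N₀ (n + 1), W n k ε = 1 - T := by
      have h := sum_W n ε
      rw [Finset.range_eq_Ico,
        ← Finset.sum_Ico_consecutive _ (Nat.zero_le N₀) (by omega : N₀ ≤ n + 1),
        ← Finset.range_eq_Ico] at h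
      rw [hTdef]; linarith
    have hlow1 : (0:ℝ) ≤ ∑ k ∈ Finset.range N₀, W n k ε * f k :=
      Finset.sum_nonneg fun k _ =>
        mul_nonneg (W_nonneg hε0 hεle1) (le_of_lt (hf_pos k))
    have hlow2 : MV N₀ * (1 - T) ≤ ∑ k ∈ Finset.Ico N₀ (n + 1), W n k ε * f k := by
      rw [← hsumW, Finset.mul_sum]
      refine Finset.sum_le_sum fun k hk => ?_
      have hkN₀ : N₀ ≤ k := (Finset.mem_Ico.mp hk).1
      have hfk : MV N₀ ≤ f k := le_of_lt (hmono N₀ (1 + k) hN₀ (by omega))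
      calc MV N₀ * W n k ε = W n k ε * MV N₀ := by ring
        _ ≤ W n k ε * f k := mul_le_mul_of_nonneg_left hfk (W_nonneg hε0 hεle1)
    have hkey : c < S n f ε := by
      have hceq : MV N₀ * (1 - (MV N₀ - c) / MV N₀) = c := by
        field_simp
        ring
      have h1T : MV N₀ * (1 - (MV N₀ - c) / MV N₀) < MV N₀ * (1 - T) := by
        apply mul_lt_mul_of_pos_left _ hMV0
        linarith
      rw [hceq] at h1T
      rw [hsplit]
      linarith
    have hmle : S n f ε ≤ S n f p :=
      S_mono_p n f hf_le hε0 hpe (le_of_lt hp.2)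
    rw [hpc] at hmle
    linarith
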